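/- For a monotone valuation v over a finite set M of items and any k ≥ 1, there exists an EFX partition of M into k bundles for v, i.e., a partition (P_1,…,P_k) with v(P_j) ≥ v(P_{j'} \ {g}) for all j, j' ∈ [k] and all g ∈ P_{j'}. -/

import Mathlib

open Finset

def IsAdditive {ι : Type*} [DecidableEq ι] (v : Finset ι → ℝ) : Prop :=
  ∀ S : Finset ι, v S = ∑ g ∈ S, v {g}

def IsPartition {ι : Type*} [DecidableEq ι] (A : Finset ι) {k : ℕ} (P : Fin k → Finset ι) : Prop :=
  (∀ i j : Fin k, i ≠ j → Disjoint (P i) (P j)) ∧ Finset.univ.biUnion P = A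

def EEFXFeasible {ι : Type*} [DecidableEq ι] (M : Finset ι) (v : Finset ι → ℝ) (n : ℕ)
    (B : Finset ι) : Prop :=
  ∃ P : Fin (n - 1) → Finset ι, IsPartition (M \ B) P ∧
    ∀ j, ∀ g ∈ P j, v (P j \ {g}) ≤ v B

def NonDegenerate {ι : Type*} [DecidableEq ι] (M : Finset ι) (v : Finset ι → ℝ) : Prop :=
  ∀ S ⊆ M, ∀ T ⊆ M, S ≠ T → v S ≠ v T

noncomputable def strongShare {ι : Type*} [DecidableEq ι] (M : Finset ι) (v : Finset ι → ℝ)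
    (n : ℕ) : ℝ :=
  sInf {x | ∃ S ⊆ M, v S = x ∧ ∀ T ⊆ M, x ≤ v T → EEFXFeasible M v n T}

noncomputable def MXS {ι : Type*} [DecidableEq ι] (M : Finset ι) (v : Finset ι → ℝ)
    (n : ℕ) : ℝ :=
  sInf {x | ∃ S ⊆ M, v S = x ∧ EEFXFeasible M v n S}

noncomputable def MMS {ι : Type*} [DecidableEq ι] (M : Finset ι) (v : Finset ι → ℝ)
    (n : ℕ) : ℝ :=
  sSup {x | ∃ P : Fin n → Finset ι, IsPartition M P ∧ x = ⨅ j, v (P j)}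

def ResidualSelfFeasible {ι : Type*} [DecidableEq ι] (M : Finset ι) (v : Finset ι → ℝ)
    (n : ℕ) (t : ℝ) : Prop :=
  ∀ k : ℕ, k < n → ∀ S : Fin k → Finset ι,
    (∀ j, S j ⊆ M) → (∀ i j : Fin k, i ≠ j → Disjoint (S i) (S j)) → (∀ j, v (S j) < t) →
    ∃ X : Fin (n - k) → Finset ι,
      IsPartition (M \ Finset.univ.biUnion S) X ∧ ∀ j, t ≤ v (X j)

noncomputable def RMMS {ι : Type*} [DecidableEq ι] (M : Finset ι) (v : Finset ι → ℝ)
    (n : ℕ) : ℝ :=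
  sSup {t | ResidualSelfFeasible M v n t}


noncomputable def efxRank {ι : Type*} [DecidableEq ι] (M : Finset ι) (v : Finset ι → ℝ)
    (x : ℝ) : ℕ :=
  ((M.powerset.image v).filter (fun y => x ≤ y)).card

noncomputable def efxW {ι : Type*} [DecidableEq ι] (M : Finset ι) (v : Finset ι → ℝ)
    (x : ℝ) : ℝ :=
  3 ^ (efxRank M v x)

lemma efxW_pos {ι : Type*} [DecidableEq ι] (M : Finset ι) (v : Finset ι → ℝ) (x : ℝ) :
    0 < efxW M v x := by
  unfold efxW; positivity

lemma efxRank_succ_le {ι : Type*} [DecidableEq ι] (M : Finset ι) (v : Finset ι → ℝ)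
    {a a' : ℝ} (ha : a ∈ M.powerset.image v) (h : a < a') :
    efxRank M v a' + 1 ≤ efxRank M v a := by
  unfold efxRank
  have hsub : insert a ((M.powerset.image v).filter (fun y => a' ≤ y)) ⊆
      (M.powerset.image v).filter (fun y => a ≤ y) := by
    intro y hy
    rcases Finset.mem_insert.mp hy with rfl | hy
    · exact Finset.mem_filter.mpr ⟨ha, le_refl _⟩
    · rcases Finset.mem_filter.mp hy with ⟨h1, h2⟩
      exact Finset.mem_filter.mpr ⟨h1, le_trans h.le h2⟩
  have hnot : a ∉ (M.powerset.image v).filter (fun y => a' ≤ y) := by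
    intro hmem
    exact absurd ((Finset.mem_filter.mp hmem).2) (not_le.mpr h)
  calc ((M.powerset.image v).filter (fun y => a' ≤ y)).card + 1
      = (insert a ((M.powerset.image v).filter (fun y => a' ≤ y))).card := by
        rw [Finset.card_insert_of_notMem hnot]
    _ ≤ _ := Finset.card_le_card hsub

lemma efxW_key {ι : Type*} [DecidableEq ι] (M : Finset ι) (v : Finset ι → ℝ)
    {a a' b' : ℝ} (ha : a ∈ M.powerset.image v) (h1 : a < a') (h2 : a < b') :
    efxW M v a' + efxW M v b' < efxW M v a := by
  have r1 := efxRank_succ_le M v ha h1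
  have r2 := efxRank_succ_le M v ha h2
  have w1 : (3:ℝ) * efxW M v a' ≤ efxW M v a := by
    unfold efxW
    calc (3:ℝ) * 3 ^ efxRank M v a' = 3 ^ (efxRank M v a' + 1) := by ring
      _ ≤ 3 ^ efxRank M v a := by
          exact pow_le_pow_right₀ (by norm_num) r1
  have w2 : (3:ℝ) * efxW M v b' ≤ efxW M v a := by
    unfold efxW
    calc (3:ℝ) * 3 ^ efxRank M v b' = 3 ^ (efxRank M v b' + 1) := by ring
      _ ≤ 3 ^ efxRank M v a := by
          exact pow_le_pow_right₀ (by norm_num) r2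
  have p1 := efxW_pos M v a'
  have p2 := efxW_pos M v b'
  linarith

theorem exists_EFX_strict {ι : Type*} [DecidableEq ι] (M : Finset ι) (v : Finset ι → ℝ)
    (hstrict : ∀ S T : Finset ι, S ⊂ T → T ⊆ M → v S < v T)
    (k : ℕ) (hk : 1 ≤ k) :
    ∃ P : Fin k → Finset ι, IsPartition M P ∧
      ∀ j j' : Fin k, ∀ g ∈ P j', v (P j' \ {g}) ≤ v (P j) := by
  classical
  haveI : NeZero k := ⟨by omega⟩
  set Φ : (Fin k → Finset ι) → ℝ := fun P => ∑ i, efxW M v (v (P i)) with hΦ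
  set F : Finset (Fin k → Finset ι) :=
    (Fintype.piFinset fun _ : Fin k => M.powerset).filter (fun P => IsPartition M P) with hFdef
  have hF : F.Nonempty := by
    refine ⟨fun i => if i = 0 then M else ∅, ?_⟩
    rw [hFdef, Finset.mem_filter]
    constructor
    · rw [Fintype.mem_piFinset]
      intro i
      split <;> simp
    · constructor
      · intro i j hij
        by_cases hi : i = 0 <;> by_cases hj : j = 0 <;> simp_all
      · ext x
        simp only [Finset.mem_biUnion, Finset.mem_univ, true_and]
        constructor
        · rintro ⟨i, hi⟩
          by_cases h : i = 0 <;> simp_all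
        · intro hx
          exact ⟨0, by simp [hx]⟩
  obtain ⟨P, hPF, hmin⟩ := F.exists_min_image Φ hF
  rw [hFdef, Finset.mem_filter, Fintype.mem_piFinset] at hPF
  obtain ⟨hPsub, hPart⟩ := hPF
  have hsub : ∀ i, P i ⊆ M := fun i => Finset.mem_powerset.mp (hPsub i)
  refine ⟨P, hPart, ?_⟩
  intro j j' g hg
  by_contra hlt
  push_neg at hlt
  -- j ≠ j'
  have hjj' : j ≠ j' := by
    rintro rfl
    have : P j \ {g} ⊂ P j := by
      rw [Finset.sdiff_singleton_eq_erase]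
      exact Finset.erase_ssubset hg
    exact absurd (hstrict _ _ this (hsub j)) (not_lt.mpr hlt.le)
  have hgM : g ∈ M := hsub j' hg
  have hgPj : g ∉ P j := fun h =>
    (Finset.disjoint_left.mp (hPart.1 j j' hjj') h) hg
  set Q : Fin k → Finset ι := fun i =>
    if i = j then insert g (P j) else if i = j' then P j' \ {g} else P i with hQdef
  have hQj : Q j = insert g (P j) := by simp [hQdef]
  have hQj' : Q j' = P j' \ {g} := by simp [hQdef, Ne.symm hjj']
  have hQo : ∀ i, i ≠ j → i ≠ j' → Q i = P i := by
    intro i h1 h2; simp [hQdef, h1, h2]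
  have hQmem : ∀ i x, x ∈ Q i ↔ ((x ∈ P i ∧ ¬(i = j' ∧ x = g)) ∨ (i = j ∧ x = g)) := by
    intro i x
    by_cases hij : i = j
    · subst hij
      rw [hQj, Finset.mem_insert]
      constructor
      · rintro (rfl | hx)
        · exact Or.inr ⟨rfl, rfl⟩
        · exact Or.inl ⟨hx, by rintro ⟨rfl, rfl⟩; exact hgPj hx⟩
      · rintro (⟨hx, _⟩ | ⟨_, rfl⟩)
        · exact Or.inr hx
        · exact Or.inl rfl
    · by_cases hij' : i = j'
      · subst hij'
        rw [hQj', Finset.mem_sdiff, Finset.mem_singleton]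
        constructor
        · rintro ⟨hx, hne⟩
          exact Or.inl ⟨hx, by rintro ⟨_, rfl⟩; exact hne rfl⟩
        · rintro (⟨hx, hne⟩ | ⟨h, _⟩)
          · exact ⟨hx, fun h => hne ⟨rfl, h⟩⟩
          · exact absurd h hij
      · rw [hQo i hij hij']
        constructor
        · intro hx; exact Or.inl ⟨hx, by rintro ⟨rfl, _⟩; exact hij' rfl⟩
        · rintro (⟨hx, _⟩ | ⟨h, _⟩)
          · exact hx
          · exact absurd h hij
  have hQsub : ∀ i, Q i ⊆ M := by
    intro i x hx
    rcases (hQmem i x).mp hx with ⟨hx, _⟩ | ⟨_, rfl⟩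
    · exact hsub i hx
    · exact hgM
  have hQpart : IsPartition M Q := by
    constructor
    · intro a b hab
      rw [Finset.disjoint_left]
      intro x hxa hxb
      rcases (hQmem a x).mp hxa with ⟨hxa', hna⟩ | ⟨rfl, rfl⟩
      · rcases (hQmem b x).mp hxb with ⟨hxb', _⟩ | ⟨rfl, rfl⟩
        · exact Finset.disjoint_left.mp (hPart.1 a b hab) hxa' hxb'
        · -- x = g ∈ P a, a ≠ j', since ¬(a = j' ∧ g = g)
          have haj' : a ≠ j' := fun h => hna ⟨h, rfl⟩
          exact Finset.disjoint_left.mp (hPart.1 a j' haj') hxa' hg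
      · rcases (hQmem b x).mp hxb with ⟨hxb', hnb⟩ | ⟨rfl, _⟩
        · have hbj' : b ≠ j' := fun h => hnb ⟨h, rfl⟩
          exact Finset.disjoint_left.mp (hPart.1 b j' hbj') hxb' hg
        · exact hab rfl
    · ext x
      simp only [Finset.mem_biUnion, Finset.mem_univ, true_and]
      constructor
      · rintro ⟨i, hx⟩
        rcases (hQmem i x).mp hx with ⟨hx', _⟩ | ⟨_, rfl⟩
        · exact hsub i hx'
        · exact hgM
      · intro hx
        have : x ∈ Finset.univ.biUnion P := hPart.2.symm ▸ hx
        rw [Finset.mem_biUnion] at this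
        obtain ⟨i, _, hxi⟩ := this
        by_cases h : i = j' ∧ x = g
        · exact ⟨j, (hQmem j x).mpr (Or.inr ⟨rfl, h.2⟩)⟩
        · exact ⟨i, (hQmem i x).mpr (Or.inl ⟨hxi, h⟩)⟩
  have hQF : Q ∈ F := by
    rw [hFdef, Finset.mem_filter, Fintype.mem_piFinset]
    exact ⟨fun i => Finset.mem_powerset.mpr (hQsub i), hQpart⟩
  -- Φ Q < Φ P
  have ha' : v (P j) < v (Q j) := by
    rw [hQj]
    exact hstrict _ _ (Finset.ssubset_insert hgPj) (Finset.insert_subset hgM (hsub j))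
  have hb' : v (P j) < v (Q j') := by rw [hQj']; exact hlt
  have haV : v (P j) ∈ M.powerset.image v :=
    Finset.mem_image.mpr ⟨P j, Finset.mem_powerset.mpr (hsub j), rfl⟩
  have hkey := efxW_key M v haV ha' hb'
  have hsplit : ∀ R : Fin k → Finset ι,
      Φ R = ∑ i ∈ Finset.univ \ ({j, j'} : Finset (Fin k)), efxW M v (v (R i))
        + (efxW M v (v (R j)) + efxW M v (v (R j'))) := by
    intro R
    simp only [hΦ]
    rw [← Finset.sum_sdiff (Finset.subset_univ ({j, j'} : Finset (Fin k))),
      Finset.sum_pair hjj']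
  have hcongr : ∑ i ∈ Finset.univ \ ({j, j'} : Finset (Fin k)), efxW M v (v (Q i))
      = ∑ i ∈ Finset.univ \ ({j, j'} : Finset (Fin k)), efxW M v (v (P i)) := by
    apply Finset.sum_congr rfl
    intro i hi
    simp only [Finset.mem_sdiff, Finset.mem_insert, Finset.mem_singleton] at hi
    push_neg at hi
    rw [hQo i hi.2.1 hi.2.2]
  have hΦlt : Φ Q < Φ P := by
    have hp := efxW_pos M v (v (P j'))
    rw [hsplit Q, hsplit P, hcongr]
    linarith
  exact absurd (hmin Q hQF) (not_le.mpr hΦlt)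

theorem stmt6 {ι : Type*} [DecidableEq ι] (M : Finset ι) (v : Finset ι → ℝ)
    (hmono : ∀ S T : Finset ι, S ⊆ T → v S ≤ v T) (hnorm : v ∅ = 0)
    (k : ℕ) (hk : 1 ≤ k) :
    ∃ P : Fin k → Finset ι, IsPartition M P ∧
      ∀ j j' : Fin k, ∀ g ∈ P j', v (P j' \ {g}) ≤ v (P j) := by
  classical
  set D : Finset ℝ :=
    ((M.powerset ×ˢ M.powerset).image fun p => v p.1 - v p.2).filter (fun d => 0 < d) with hD
  set ε : ℝ := if hne : D.Nonempty then D.min' hne / (M.card + 1) else 1 with hε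
  have hεpos : 0 < ε := by
    rw [hε]
    split
    · rename_i hne
      have hpos : ∀ x ∈ D, 0 < x := by
        intro x hx
        rw [hD, Finset.mem_filter] at hx
        exact hx.2
      exact div_pos (hpos _ (D.min'_mem hne)) (by positivity)
    · norm_num
  set v' : Finset ι → ℝ := fun S => v S + ε * S.card with hv'
  have hkey : ∀ A B : Finset ι, A ⊆ M → B ⊆ M → v' A ≤ v' B → v A ≤ v B := by
    intro A B hA hB hle
    by_contra hgt
    push_neg at hgt
    have hdmem : v A - v B ∈ D := by
      rw [hD, Finset.mem_filter]
      refine ⟨Finset.mem_image.mpr ⟨(A, B), ?_, rfl⟩, by linarith⟩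
      exact Finset.mem_product.mpr ⟨Finset.mem_powerset.mpr hA, Finset.mem_powerset.mpr hB⟩
    have hne : D.Nonempty := ⟨_, hdmem⟩
    have hεeq : ε = D.min' hne / (M.card + 1) := by rw [hε, dif_pos hne]
    have hmin : D.min' hne ≤ v A - v B := D.min'_le _ hdmem
    have hBM : (B.card : ℝ) ≤ M.card := by
      exact_mod_cast Finset.card_le_card hB
    have h1 : v A - v B ≤ ε * B.card - ε * A.card := by
      simp only [hv'] at hle; linarith
    have h2 : ε * B.card - ε * A.card ≤ ε * M.card := by
      have : (0:ℝ) ≤ (A.card : ℝ) := Nat.cast_nonneg _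
      nlinarith
    have h3 : ε * M.card < ε * (M.card + 1) := by nlinarith
    have h4 : ε * (M.card + 1) = D.min' hne := by
      rw [hεeq]; exact div_mul_cancel₀ _ (by positivity)
    linarith
  have hstrict : ∀ S T : Finset ι, S ⊂ T → T ⊆ M → v' S < v' T := by
    intro S T hST hTM
    have h1 : v S ≤ v T := hmono S T hST.subset
    have h2 : (S.card : ℝ) < T.card := by
      exact_mod_cast Finset.card_lt_card hST
    simp only [hv']
    nlinarith
  obtain ⟨P, hPart, hEFX⟩ := exists_EFX_strict M v' hstrict k hk
  have hsub : ∀ i, P i ⊆ M := by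
    intro i
    rw [← hPart.2]
    exact Finset.subset_biUnion_of_mem P (Finset.mem_univ i)
  refine ⟨P, hPart, ?_⟩
  intro j j' g hg
  exact hkey _ _ ((Finset.sdiff_subset).trans (hsub j')) (hsub j) (hEFX j j' g hg)
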